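/- Let A = (a_{ℓm}) ∈ M_n(ℍ) with n ≥ 2. Then the second-order quaternionic trace T_{ℍ,2}(A), defined as the coefficient of z² in the polynomial z ↦ det(I_{2n} − z·χ_A), satisfies T_{ℍ,2}(A) = ∑_{ℓ=1}^{n} |a_{ℓℓ}|² + 4 ∑_{ℓ=1}^{n−1} ∑_{m=ℓ+1}^{n} Re(a_{ℓℓ})Re(a_{mm}) − 2 ∑_{ℓ=1}^{n−1} ∑_{m=ℓ+1}^{n} Re(a_{mℓ}a_{ℓm}), where |q|² denotes the squared quaternionic norm and Re the real part of a quaternion. -/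

import Mathlib

open Matrix Polynomial

/-- The first complex component of a quaternion `q = α + β j`:  `α = re + imI * i`. -/
noncomputable def qC1 (q : Quaternion ℝ) : ℂ := ⟨q.re, q.imI⟩

/-- The second complex component of a quaternion `q = α + β j`:  `β = imJ + imK * i`. -/
noncomputable def qC2 (q : Quaternion ℝ) : ℂ := ⟨q.imJ, q.imK⟩

/-- The companion matrix `χ_A = [[A₁, A₂], [-conj A₂, conj A₁]]` of a quaternionic matrix
`A = A₁ + A₂ j`. -/
noncomputable def companion {n : ℕ} (A : Matrix (Fin n) (Fin n) (Quaternion ℝ)) :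
    Matrix (Fin n ⊕ Fin n) (Fin n ⊕ Fin n) ℂ :=
  Matrix.fromBlocks (A.map qC1) (A.map qC2)
    (-(A.map fun q => (starRingEnd ℂ) (qC2 q))) (A.map fun q => (starRingEnd ℂ) (qC1 q))

/-- `lam` is a family of standard eigenvalues of the quaternionic matrix `A`: each has
nonnegative imaginary part and the characteristic polynomial of `χ_A` is
`∏ k, (X - λ k) (X - conj (λ k))`. -/
noncomputable def IsStdEigenvalues {n : ℕ} (A : Matrix (Fin n) (Fin n) (Quaternion ℝ))
    (lam : Fin n → ℂ) : Prop :=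
  (∀ k, 0 ≤ (lam k).im) ∧
    (companion A).charpoly =
      ∏ k, ((X - C (lam k)) * (X - C ((starRingEnd ℂ) (lam k))))

/-- The polynomial `z ↦ det (I - z M)` of a complex square matrix `M`. -/
noncomputable def detPolySub {m : Type*} [Fintype m] [DecidableEq m] (M : Matrix m m ℂ) :
    Polynomial ℂ :=
  Matrix.det ((1 : Matrix m m (Polynomial ℂ)) - (X : Polynomial ℂ) • M.map C)


open Finset

section AuxPoly

lemma coeff0_prod' {ι : Type*} (s : Finset ι) (c : ι → ℂ) :
    (∏ i ∈ s, (1 - C (c i) * X)).coeff 0 = 1 := by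
  simp [coeff_zero_eq_eval_zero, eval_prod]

lemma coeff1_prod' {ι : Type*} (s : Finset ι) (c : ι → ℂ) :
    (∏ i ∈ s, (1 - C (c i) * X)).coeff 1 = -∑ i ∈ s, c i := by
  induction s using Finset.cons_induction with
  | empty => simp [coeff_one]
  | cons a s ha ih =>
    rw [Finset.prod_cons, sub_mul, one_mul, coeff_sub, ih, mul_assoc, coeff_C_mul,
      coeff_X_mul, coeff0_prod', Finset.sum_cons]
    ring

lemma coeff2_prod' {ι : Type*} (s : Finset ι) (c : ι → ℂ) :
    2 * (∏ i ∈ s, (1 - C (c i) * X)).coeff 2 =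
      (∑ i ∈ s, c i) ^ 2 - ∑ i ∈ s, (c i) ^ 2 := by
  induction s using Finset.cons_induction with
  | empty => simp [coeff_one]
  | cons a s ha ih =>
    rw [Finset.prod_cons, sub_mul, one_mul, coeff_sub, mul_assoc, coeff_C_mul,
      coeff_X_mul, Finset.sum_cons, Finset.sum_cons, mul_sub, ih]
    have h1 := coeff1_prod' s c
    rw [h1]; ring

end AuxPoly

section AuxDet

variable {m : Type*} [Fintype m] [DecidableEq m]

noncomputable def NN (M : Matrix m m ℂ) : Matrix m m (Polynomial ℂ) :=
  (1 : Matrix m m (Polynomial ℂ)) - (X : Polynomial ℂ) • M.map C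

lemma NN_diag (M : Matrix m m ℂ) (i : m) : NN M i i = 1 - C (M i i) * X := by
  rw [NN, Matrix.sub_apply, Matrix.smul_apply, Matrix.one_apply_eq, Matrix.map_apply,
    smul_eq_mul, mul_comm]

lemma NN_off (M : Matrix m m ℂ) {i j : m} (h : i ≠ j) : NN M i j = -(C (M i j) * X) := by
  rw [NN, Matrix.sub_apply, Matrix.smul_apply, Matrix.one_apply_ne h, Matrix.map_apply,
    smul_eq_mul, mul_comm, zero_sub]

lemma vanish (M : Matrix m m ℂ) (σ : Equiv.Perm m) (h1 : σ ≠ 1) (h2 : ¬ σ.IsSwap) :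
    (∏ i, NN M (σ i) i).coeff 2 = 0 := by
  have hcard : 2 < σ.support.card := by
    rcases Nat.lt_or_ge σ.support.card 3 with h | h
    · interval_cases h' : σ.support.card
      · exact absurd (Equiv.Perm.card_support_eq_zero.mp h') h1
      · exact absurd h' σ.card_support_ne_one
      · exact absurd (Equiv.Perm.card_support_eq_two.mp h') h2
    · omega
  obtain ⟨a, b, c, ha, hb, hc, hab, hac, hbc⟩ := Finset.two_lt_card_iff.mp hcard
  have hdvd : (X : Polynomial ℂ) ^ 3 ∣ ∏ i, NN M (σ i) i := by
    have h3 : ∏ _i ∈ ({a, b, c} : Finset m), (X : Polynomial ℂ) = X ^ 3 := by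
      rw [Finset.prod_const]
      congr 1
      rw [Finset.card_insert_of_notMem (by simp [hab, hac]),
        Finset.card_insert_of_notMem (by simp [hbc]), Finset.card_singleton]
    calc (X : Polynomial ℂ) ^ 3 = ∏ _i ∈ ({a, b, c} : Finset m), (X : Polynomial ℂ) := h3.symm
      _ ∣ ∏ i ∈ ({a, b, c} : Finset m), NN M (σ i) i := by
          apply Finset.prod_dvd_prod_of_dvd
          intro i hi
          have hne : σ i ≠ i := by
            simp only [Finset.mem_insert, Finset.mem_singleton] at hi
            rcases hi with rfl | rfl | rfl <;>
              [exact Equiv.Perm.mem_support.mp ha; exact Equiv.Perm.mem_support.mp hb;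
                exact Equiv.Perm.mem_support.mp hc]
          rw [NN_off M hne]
          exact (dvd_neg).mpr (dvd_mul_left X _)
      _ ∣ ∏ i, NN M (σ i) i :=
          Finset.prod_dvd_prod_of_subset _ _ _ (Finset.subset_univ _)
  obtain ⟨q, hq⟩ := hdvd
  rw [hq, mul_comm, Polynomial.coeff_mul_X_pow']
  simp

lemma swap_coeff (M : Matrix m m ℂ) {a b : m} (hab : a ≠ b) :
    (∏ i, NN M (Equiv.swap a b i) i).coeff 2 = M b a * M a b := by
  set f : m → Polynomial ℂ := fun i => NN M (Equiv.swap a b i) i with hf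
  have hb' : b ∈ univ.erase a := Finset.mem_erase.mpr ⟨Ne.symm hab, mem_univ b⟩
  rw [← Finset.prod_erase_mul univ f (mem_univ a), ← Finset.prod_erase_mul _ f hb']
  have hfa : f a = -(C (M b a) * X) := by
    rw [hf]; simp only [Equiv.swap_apply_left]; exact NN_off M (Ne.symm hab)
  have hfb : f b = -(C (M a b) * X) := by
    rw [hf]; simp only [Equiv.swap_apply_right]; exact NN_off M hab
  have hrest : ∏ i ∈ (univ.erase a).erase b, f i =
      ∏ i ∈ (univ.erase a).erase b, (1 - C (M i i) * X) := by
    apply Finset.prod_congr rfl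
    intro i hi
    have hia : i ≠ a := Finset.ne_of_mem_erase (Finset.mem_of_mem_erase hi)
    have hib : i ≠ b := Finset.ne_of_mem_erase hi
    rw [hf]
    simp only [Equiv.swap_apply_of_ne_of_ne hia hib]
    exact NN_diag M i
  rw [hfa, hfb, hrest]
  have : (∏ i ∈ (univ.erase a).erase b, (1 - C (M i i) * X)) * -(C (M a b) * X) *
      -(C (M b a) * X) =
      (C (M b a) * (C (M a b) * ∏ i ∈ (univ.erase a).erase b, (1 - C (M i i) * X))) * X ^ 2 := by
    ring
  rw [this, Polynomial.coeff_mul_X_pow', if_pos (by norm_num)]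
  norm_num [coeff_C_mul, coeff0_prod']

lemma swap_eq_swap_cases {x y a b : m} (hxy : x ≠ y)
    (h : Equiv.swap x y = Equiv.swap a b) : (x = a ∧ y = b) ∨ (x = b ∧ y = a) := by
  have hx : Equiv.swap a b x = y := by rw [← h, Equiv.swap_apply_left]
  by_cases hxa : x = a
  · subst hxa
    rw [Equiv.swap_apply_left] at hx
    exact Or.inl ⟨rfl, hx.symm⟩
  by_cases hxb : x = b
  · subst hxb
    rw [Equiv.swap_apply_right] at hx
    exact Or.inr ⟨rfl, hx.symm⟩
  · rw [Equiv.swap_apply_of_ne_of_ne hxa hxb] at hx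
    exact absurd hx hxy

end AuxDet

section General

variable {m : Type*} [Fintype m] [DecidableEq m]

lemma two_mul_coeff2 (M : Matrix m m ℂ) :
    2 * (detPolySub M).coeff 2 = trace M ^ 2 - trace (M * M) := by
  classical
  set g : Equiv.Perm m → ℂ := fun σ => (Equiv.Perm.sign σ : ℤ) • (∏ i, NN M (σ i) i).coeff 2
    with hg
  have hdet : (detPolySub M).coeff 2 = ∑ σ : Equiv.Perm m, g σ := by
    rw [detPolySub, ← NN, Matrix.det_apply, finset_sum_coeff]
    apply Finset.sum_congr rfl
    intro σ _
    rw [hg, Polynomial.coeff_smul]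
    simp [Units.smul_def, zsmul_eq_mul]
  have hsplit : ∑ σ : Equiv.Perm m, g σ =
      g 1 + ∑ σ ∈ univ.filter (fun σ => σ.IsSwap), g σ := by
    rw [← Finset.add_sum_erase univ g (mem_univ 1)]
    congr 1
    symm
    apply Finset.sum_subset
    · intro σ hσ
      simp only [Finset.mem_filter] at hσ
      refine Finset.mem_erase.mpr ⟨?_, mem_univ σ⟩
      rintro rfl
      obtain ⟨x, y, hxy, hs⟩ := hσ.2
      have : x = y := by
        have := congrArg (fun e : Equiv.Perm m => e x) hs
        simpa using this
      exact hxy this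
    · intro σ hσ hσ'
      simp only [Finset.mem_filter, mem_univ, true_and] at hσ'
      have h1 : σ ≠ 1 := Finset.ne_of_mem_erase hσ
      rw [hg]
      simp only [vanish M σ h1 hσ', smul_zero]
  have hid : 2 * g 1 = trace M ^ 2 - ∑ i, M i i ^ 2 := by
    rw [hg]
    simp only [Equiv.Perm.sign_one, Units.val_one, Int.cast_one, one_smul, Equiv.Perm.one_apply]
    have : ∀ i : m, NN M i i = 1 - C (M i i) * X := NN_diag M
    rw [Finset.prod_congr rfl (fun i _ => this i), coeff2_prod', Matrix.trace]
    rfl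
  have hswap : 2 * ∑ σ ∈ univ.filter (fun σ => σ.IsSwap), g σ =
      -∑ p ∈ (univ : Finset m).offDiag, M p.2 p.1 * M p.1 p.2 := by
    have hcomp := Finset.sum_comp (s := (univ : Finset m).offDiag) g
      (fun p => Equiv.swap p.1 p.2)
    have himg : (univ : Finset m).offDiag.image (fun p => Equiv.swap p.1 p.2) =
        univ.filter (fun σ => σ.IsSwap) := by
      ext σ
      simp only [Finset.mem_image, Finset.mem_filter, mem_univ, true_and, Finset.mem_offDiag]
      constructor
      · rintro ⟨p, hp, rfl⟩
        exact ⟨p.1, p.2, hp, rfl⟩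
      · rintro ⟨x, y, hxy, rfl⟩
        exact ⟨(x, y), hxy, rfl⟩
    have hfib : ∀ σ ∈ (univ : Finset m).offDiag.image (fun p => Equiv.swap p.1 p.2),
        ((univ : Finset m).offDiag.filter fun p => Equiv.swap p.1 p.2 = σ).card = 2 := by
      intro σ hσ
      rw [himg] at hσ
      simp only [Finset.mem_filter, mem_univ, true_and] at hσ
      obtain ⟨a, b, hab, rfl⟩ := hσ
      have : ((univ : Finset m).offDiag.filter fun p => Equiv.swap p.1 p.2 = Equiv.swap a b) =
          {(a, b), (b, a)} := by
        ext p
        simp only [Finset.mem_filter, Finset.mem_offDiag, mem_univ, true_and,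
          Finset.mem_insert, Finset.mem_singleton]
        constructor
        · rintro ⟨hne, heq⟩
          rcases swap_eq_swap_cases hne heq with ⟨h1, h2⟩ | ⟨h1, h2⟩
          · left; exact Prod.ext h1 h2
          · right; exact Prod.ext h1 h2
        · rintro (rfl | rfl)
          · exact ⟨hab, rfl⟩
          · exact ⟨hab.symm, Equiv.swap_comm _ _⟩
      rw [this, Finset.card_insert_of_notMem (by simp [Prod.ext_iff, hab]),
        Finset.card_singleton]
    have hterm : ∀ p ∈ (univ : Finset m).offDiag,
        g (Equiv.swap p.1 p.2) = -(M p.2 p.1 * M p.1 p.2) := by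
      intro p hp
      have hne : p.1 ≠ p.2 := (Finset.mem_offDiag.mp hp).2.2
      rw [hg]
      simp only [Equiv.Perm.sign_swap hne, swap_coeff M hne, Units.val_neg, Units.val_one,
        Int.cast_neg, Int.cast_one, neg_smul, one_smul]
    calc 2 * ∑ σ ∈ univ.filter (fun σ => σ.IsSwap), g σ
        = ∑ σ ∈ univ.filter (fun σ => σ.IsSwap), (2 : ℕ) • g σ := by
          rw [Finset.mul_sum]; apply Finset.sum_congr rfl; intro σ _; simp [two_mul]
      _ = ∑ p ∈ (univ : Finset m).offDiag, g (Equiv.swap p.1 p.2) := by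
          rw [hcomp, himg]
          apply Finset.sum_congr rfl
          intro σ hσ
          rw [← himg] at hσ
          rw [hfib σ hσ]
      _ = -∑ p ∈ (univ : Finset m).offDiag, M p.2 p.1 * M p.1 p.2 := by
          rw [← Finset.sum_neg_distrib]
          exact Finset.sum_congr rfl hterm
  have htr2 : trace (M * M) = (∑ i, M i i ^ 2) +
      ∑ p ∈ (univ : Finset m).offDiag, M p.2 p.1 * M p.1 p.2 := by
    have : trace (M * M) = ∑ p ∈ (univ : Finset m) ×ˢ univ, M p.2 p.1 * M p.1 p.2 := by
      rw [Matrix.trace, Finset.sum_product]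
      simp only [Matrix.diag_apply, Matrix.mul_apply]
      apply Finset.sum_congr rfl
      intro i _
      apply Finset.sum_congr rfl
      intro j _
      ring
    rw [this, ← Finset.diag_union_offDiag, Finset.sum_union (Finset.disjoint_diag_offDiag _),
      Finset.sum_diag]
    congr 1
    apply Finset.sum_congr rfl
    intro i _
    ring
  rw [hdet, hsplit, mul_add, hid, hswap, htr2]
  ring

end General

section Companion

lemma trace_fromBlocks' {k l : Type*} [Fintype k] [Fintype l] (P : Matrix k k ℂ)
    (Q : Matrix k l ℂ) (R : Matrix l k ℂ) (S : Matrix l l ℂ) :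
    trace (Matrix.fromBlocks P Q R S) = trace P + trace S := by
  simp [Matrix.trace, Fintype.sum_sum_type, Matrix.fromBlocks]

lemma quat_key (p q : Quaternion ℝ) :
    qC1 p * qC1 q + qC2 p * -((starRingEnd ℂ) (qC2 q)) +
      (-((starRingEnd ℂ) (qC2 p)) * qC2 q +
        (starRingEnd ℂ) (qC1 p) * (starRingEnd ℂ) (qC1 q)) =
      2 * (((p * q).re : ℝ) : ℂ) := by
  apply Complex.ext <;>
    simp [qC1, qC2, Quaternion.re_mul, Complex.ext_iff] <;> ring

lemma trace_companion {n : ℕ} (A : Matrix (Fin n) (Fin n) (Quaternion ℝ)) :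
    trace (companion A) = ((2 * ∑ ℓ, (A ℓ ℓ).re : ℝ) : ℂ) := by
  rw [companion, trace_fromBlocks', Matrix.trace, Matrix.trace, ← Finset.sum_add_distrib]
  push_cast [Finset.mul_sum]
  apply Finset.sum_congr rfl
  intro ℓ _
  simp only [Matrix.diag_apply, Matrix.map_apply]
  apply Complex.ext <;> simp [qC1, Complex.ext_iff] <;> ring

lemma trace_mul_eq {k : Type*} [Fintype k] (P Q : Matrix k k ℂ) :
    trace (P * Q) = ∑ ℓ, ∑ m, P ℓ m * Q m ℓ := by
  simp [Matrix.trace, Matrix.mul_apply, Matrix.diag]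

lemma trace_companion_sq {n : ℕ} (A : Matrix (Fin n) (Fin n) (Quaternion ℝ)) :
    trace (companion A * companion A) =
      ((∑ ℓ, ∑ m, 2 * (A ℓ m * A m ℓ).re : ℝ) : ℂ) := by
  rw [companion, Matrix.fromBlocks_multiply, trace_fromBlocks', trace_add, trace_add,
    trace_mul_eq, trace_mul_eq, trace_mul_eq, trace_mul_eq]
  push_cast
  simp only [← Finset.sum_add_distrib]
  apply Finset.sum_congr rfl
  intro ℓ _
  apply Finset.sum_congr rfl
  intro m _
  simp only [Matrix.map_apply, Matrix.neg_apply]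
  exact quat_key (A ℓ m) (A m ℓ)

lemma double_sum_symm {n : ℕ} (h : Fin n → Fin n → ℝ) (hs : ∀ i j, h i j = h j i) :
    ∑ i, ∑ j, h i j = (∑ i, h i i) + 2 * ∑ i, ∑ j ∈ Finset.Ioi i, h i j := by
  have key := Finset.sum_sum_Ioi_add_eq_sum_sum_off_diag h
  simp only [Finset.compl_singleton] at key
  calc ∑ i, ∑ j, h i j = ∑ i, (h i i + ∑ j ∈ Finset.univ.erase i, h i j) := by
        refine Finset.sum_congr rfl fun i _ => ?_
        rw [Finset.add_sum_erase _ _ (Finset.mem_univ i)]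
    _ = (∑ i, h i i) + ∑ i, ∑ j ∈ Finset.univ.erase i, h j i := by
        rw [Finset.sum_add_distrib]
        congr 1
        exact Finset.sum_congr rfl fun i _ => Finset.sum_congr rfl fun j _ => hs i j
    _ = (∑ i, h i i) + ∑ i, ∑ j ∈ Finset.Ioi i, (h j i + h i j) := by
        congr 1
        convert key.symm using 3
    _ = (∑ i, h i i) + 2 * ∑ i, ∑ j ∈ Finset.Ioi i, h i j := by
        congr 1
        rw [Finset.mul_sum]
        refine Finset.sum_congr rfl fun i _ => ?_
        rw [Finset.mul_sum]
        refine Finset.sum_congr rfl fun j _ => ?_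
        rw [hs j i]; ring

lemma re_mul_comm (p q : Quaternion ℝ) : (p * q).re = (q * p).re := by
  simp [Quaternion.re_mul]; ring

end Companion


/-- The second-order quaternionic trace of `A ∈ M_n(ℍ)`, i.e. the coefficient of `z²` in
`det(I_{2n} - z χ_A)`, expressed explicitly in terms of the entries of `A`. -/
theorem second_trace_eq_entries {n : ℕ} (hn : 2 ≤ n)
    (A : Matrix (Fin n) (Fin n) (Quaternion ℝ)) :
    (detPolySub (companion A)).coeff 2 =
      (((∑ ℓ, Quaternion.normSq (A ℓ ℓ)) +
        4 * (∑ ℓ, ∑ m ∈ Finset.Ioi ℓ, (A ℓ ℓ).re * (A m m).re) -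
        2 * ∑ ℓ, ∑ m ∈ Finset.Ioi ℓ, (A m ℓ * A ℓ m).re : ℝ) : ℂ) := by
  have h2 := two_mul_coeff2 (companion A)
  rw [trace_companion, trace_companion_sq] at h2
  apply mul_left_cancel₀ (by norm_num : (2 : ℂ) ≠ 0)
  rw [h2]
  have eS : (∑ ℓ, (A ℓ ℓ).re) ^ 2 = (∑ ℓ, (A ℓ ℓ).re * (A ℓ ℓ).re) +
      2 * ∑ ℓ, ∑ m ∈ Finset.Ioi ℓ, (A ℓ ℓ).re * (A m m).re := by
    rw [sq, Finset.sum_mul_sum,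
      double_sum_symm (fun ℓ m => (A ℓ ℓ).re * (A m m).re) (fun i j => mul_comm _ _)]
  have hsym : ∀ i j : Fin n, (A i j * A j i).re = (A j i * A i j).re :=
    fun i j => re_mul_comm _ _
  have eA : (∑ ℓ, ∑ m, 2 * (A ℓ m * A m ℓ).re) = 2 * (∑ ℓ, (A ℓ ℓ * A ℓ ℓ).re) +
      4 * ∑ ℓ, ∑ m ∈ Finset.Ioi ℓ, (A m ℓ * A ℓ m).re := by
    have hd := double_sum_symm (fun ℓ m => (A ℓ m * A m ℓ).re) hsym
    have h1 : (∑ ℓ, ∑ m, 2 * (A ℓ m * A m ℓ).re) =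
        2 * ∑ ℓ, ∑ m, (A ℓ m * A m ℓ).re := by
      rw [Finset.mul_sum]
      exact Finset.sum_congr rfl fun ℓ _ => (Finset.mul_sum _ _ _).symm
    have h3 : ∑ ℓ, ∑ m ∈ Finset.Ioi ℓ, (A ℓ m * A m ℓ).re =
        ∑ ℓ, ∑ m ∈ Finset.Ioi ℓ, (A m ℓ * A ℓ m).re :=
      Finset.sum_congr rfl fun ℓ _ => Finset.sum_congr rfl fun m _ => hsym ℓ m
    rw [h1, hd, h3]
    ring
  have eN : (∑ ℓ, Quaternion.normSq (A ℓ ℓ)) =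
      2 * (∑ ℓ, (A ℓ ℓ).re * (A ℓ ℓ).re) - ∑ ℓ, (A ℓ ℓ * A ℓ ℓ).re := by
    rw [Finset.mul_sum, ← Finset.sum_sub_distrib]
    refine Finset.sum_congr rfl fun ℓ _ => ?_
    simp [Quaternion.normSq_def', Quaternion.re_mul]
    ring
  have key : ((2 * ∑ ℓ, (A ℓ ℓ).re) ^ 2 - (∑ ℓ, ∑ m, 2 * (A ℓ m * A m ℓ).re) : ℝ) =
      2 * ((∑ ℓ, Quaternion.normSq (A ℓ ℓ)) +
        4 * (∑ ℓ, ∑ m ∈ Finset.Ioi ℓ, (A ℓ ℓ).re * (A m m).re) -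
        2 * ∑ ℓ, ∑ m ∈ Finset.Ioi ℓ, (A m ℓ * A ℓ m).re) := by
    linear_combination 4 * eS - eA - 2 * eN
  calc ((2 * ∑ ℓ, (A ℓ ℓ).re : ℝ) : ℂ) ^ 2 - ((∑ ℓ, ∑ m, 2 * (A ℓ m * A m ℓ).re : ℝ) : ℂ)
      = (((2 * ∑ ℓ, (A ℓ ℓ).re) ^ 2 - (∑ ℓ, ∑ m, 2 * (A ℓ m * A m ℓ).re) : ℝ) : ℂ) := by
        push_cast
        ring
    _ = ((2 * ((∑ ℓ, Quaternion.normSq (A ℓ ℓ)) +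
          4 * (∑ ℓ, ∑ m ∈ Finset.Ioi ℓ, (A ℓ ℓ).re * (A m m).re) -
          2 * ∑ ℓ, ∑ m ∈ Finset.Ioi ℓ, (A m ℓ * A ℓ m).re) : ℝ) : ℂ) := by
        rw [key]
    _ = 2 * (((∑ ℓ, Quaternion.normSq (A ℓ ℓ)) +
          4 * (∑ ℓ, ∑ m ∈ Finset.Ioi ℓ, (A ℓ ℓ).re * (A m m).re) -
          2 * ∑ ℓ, ∑ m ∈ Finset.Ioi ℓ, (A m ℓ * A ℓ m).re : ℝ) : ℂ) := by
        push_cast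
        ring
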